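/- If an integer polymatroid (N,h) is tight and selfdual, then its free expansion (φ(N), h_φ) is tight and selfdual, where φ assigns pairwise disjoint sets φ(i) with |φ(i)| = h({i}) and h_φ(K) = min_{J⊆N} [h(J) + |K ∖ φ(J)|] for K ⊆ φ(N). -/

import Mathlib

open Finset

/-- The free expansion `h_φ` of an integer set function `h`. -/
def expandP {N M : Type*} [Fintype N] [DecidableEq N] [DecidableEq M]
    (h : Finset N → ℤ) (φ : N → Finset M) (K : Finset M) : ℤ :=
  (Finset.univ : Finset N).powerset.inf' (Finset.powerset_nonempty _)
    (fun J => h J + ((K \ J.biUnion φ).card : ℤ))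

section Aux

variable {N M : Type*} [Fintype N] [DecidableEq N] [DecidableEq M]

lemma expandP_le (h : Finset N → ℤ) (φ : N → Finset M) (K : Finset M) (J : Finset N) :
    expandP h φ K ≤ h J + ((K \ J.biUnion φ).card : ℤ) :=
  Finset.inf'_le _ (Finset.mem_powerset.2 (Finset.subset_univ J))

lemma le_expandP {h : Finset N → ℤ} {φ : N → Finset M} {K : Finset M} {c : ℤ}
    (H : ∀ J : Finset N, c ≤ h J + ((K \ J.biUnion φ).card : ℤ)) :
    c ≤ expandP h φ K :=
  Finset.le_inf' _ _ (fun J _ => H J)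

lemma sum_bound (h : Finset N → ℤ) (hnorm : h ∅ = 0)
    (hmono : ∀ I J : Finset N, I ⊆ J → h I ≤ h J)
    (hsub : ∀ I J : Finset N, h (I ∪ J) + h (I ∩ J) ≤ h I + h J)
    (T J : Finset N) : h (J ∪ T) ≤ h J + ∑ i ∈ T, h {i} := by
  induction T using Finset.cons_induction generalizing J with
  | empty => simp
  | cons a T ha ih =>
    have h0 : (0:ℤ) ≤ h ((J ∪ T) ∩ {a}) := hnorm ▸ hmono ∅ _ (empty_subset _)
    have hs := hsub (J ∪ T) {a}
    have heq : J ∪ cons a T ha = (J ∪ T) ∪ {a} := by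
      rw [cons_eq_insert]; ext x; simp
    have hih := ih J
    rw [heq, sum_cons]
    linarith

lemma phi_inj {φ : N → Finset M} (hdisj : ∀ i j : N, i ≠ j → Disjoint (φ i) (φ j))
    {x : M} {i j : N} (hi : x ∈ φ i) (hj : x ∈ φ j) : i = j := by
  by_contra hne
  exact (Finset.disjoint_left.mp (hdisj i j hne) hi) hj

lemma biUnion_compl_eq {φ : N → Finset M} (hdisj : ∀ i j : N, i ≠ j → Disjoint (φ i) (φ j))
    (J : Finset N) : Jᶜ.biUnion φ = Finset.univ.biUnion φ \ J.biUnion φ := by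
  ext x
  simp only [mem_biUnion, mem_sdiff, mem_compl, mem_univ, true_and]
  constructor
  · rintro ⟨i, hi, hx⟩
    refine ⟨⟨i, hx⟩, ?_⟩
    rintro ⟨j, hjJ, hxj⟩
    exact hi (phi_inj hdisj hx hxj ▸ hjJ)
  · rintro ⟨⟨i, hx⟩, hnx⟩
    exact ⟨i, fun hiJ => hnx ⟨i, hiJ, hx⟩, hx⟩

lemma card_biUnion_int (h : Finset N → ℤ) (φ : N → Finset M)
    (hcard : ∀ i : N, ((φ i).card : ℤ) = h {i})
    (hdisj : ∀ i j : N, i ≠ j → Disjoint (φ i) (φ j))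
    (S : Finset N) : ((S.biUnion φ).card : ℤ) = ∑ i ∈ S, h {i} := by
  rw [Finset.card_biUnion (fun i _ j _ hne => hdisj i j hne)]
  push_cast
  exact Finset.sum_congr rfl (fun i _ => hcard i)

lemma expandP_univ (h : Finset N → ℤ) (hnorm : h ∅ = 0)
    (hmono : ∀ I J : Finset N, I ⊆ J → h I ≤ h J)
    (hsub : ∀ I J : Finset N, h (I ∪ J) + h (I ∩ J) ≤ h I + h J)
    (φ : N → Finset M)
    (hcard : ∀ i : N, ((φ i).card : ℤ) = h {i})
    (hdisj : ∀ i j : N, i ≠ j → Disjoint (φ i) (φ j)) :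
    expandP h φ (Finset.univ.biUnion φ) = h Finset.univ := by
  apply le_antisymm
  · have := expandP_le h φ (Finset.univ.biUnion φ) Finset.univ
    simpa using this
  · apply le_expandP
    intro J
    have h1 : Finset.univ.biUnion φ \ J.biUnion φ = Jᶜ.biUnion φ :=
      (biUnion_compl_eq hdisj J).symm
    rw [h1, card_biUnion_int h φ hcard hdisj]
    have := sum_bound h hnorm hmono hsub Jᶜ J
    rw [Finset.union_compl] at this
    linarith

lemma expandP_single (h : Finset N → ℤ) (hnorm : h ∅ = 0)
    (hmono : ∀ I J : Finset N, I ⊆ J → h I ≤ h J)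
    (φ : N → Finset M)
    (hcard : ∀ i : N, ((φ i).card : ℤ) = h {i})
    {k : M} (hk : k ∈ Finset.univ.biUnion φ) :
    expandP h φ {k} = 1 := by
  apply le_antisymm
  · have := expandP_le h φ {k} ∅
    simpa [hnorm] using this
  · apply le_expandP
    intro J
    have h0 : (0:ℤ) ≤ h J := hnorm ▸ hmono ∅ _ (empty_subset _)
    by_cases hkJ : k ∈ J.biUnion φ
    · obtain ⟨i, hiJ, hki⟩ := Finset.mem_biUnion.mp hkJ
      have h1 : (1:ℤ) ≤ h {i} := by
        rw [← hcard i]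
        exact_mod_cast Finset.card_pos.2 ⟨k, hki⟩
      have h2 : h {i} ≤ h J := hmono _ _ (Finset.singleton_subset_iff.2 hiJ)
      have h3 : (0:ℤ) ≤ ((({k} : Finset M) \ J.biUnion φ).card : ℤ) := by positivity
      linarith
    · have h1 : ({k} : Finset M) \ J.biUnion φ = {k} := by
        rw [Finset.sdiff_eq_self_iff_disjoint]
        simpa using hkJ
      rw [h1]
      simp
      linarith

lemma key_identity (h : Finset N → ℤ)
    (hself : ∀ I : Finset N, h I = h Iᶜ - h Finset.univ + ∑ i ∈ I, h {i})
    (φ : N → Finset M)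
    (hcard : ∀ i : N, ((φ i).card : ℤ) = h {i})
    (hdisj : ∀ i j : N, i ≠ j → Disjoint (φ i) (φ j))
    {K : Finset M} (hK : K ⊆ Finset.univ.biUnion φ) (J : Finset N) :
    h Jᶜ + ((K \ Jᶜ.biUnion φ).card : ℤ)
      = h J + (((Finset.univ.biUnion φ \ K) \ J.biUnion φ).card : ℤ) - h Finset.univ
        + (K.card : ℤ) := by
  set E := Finset.univ.biUnion φ with hEdef
  have hcompl : Jᶜ.biUnion φ = E \ J.biUnion φ := biUnion_compl_eq hdisj J
  have c1 : K \ Jᶜ.biUnion φ = K ∩ J.biUnion φ := by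
    rw [hcompl]; ext x
    simp only [mem_sdiff, mem_inter]
    constructor
    · rintro ⟨hxK, hx⟩
      refine ⟨hxK, ?_⟩
      by_contra hnx
      exact hx ⟨hK hxK, hnx⟩
    · rintro ⟨hxK, hx⟩
      exact ⟨hxK, fun hy => hy.2 hx⟩
  have n1 : (K ∩ J.biUnion φ).card + (K \ J.biUnion φ).card = K.card :=
    Finset.card_inter_add_card_sdiff K (J.biUnion φ)
  have s1 : (E \ J.biUnion φ) ∩ K = K \ J.biUnion φ := by
    ext x
    simp only [mem_sdiff, mem_inter]
    constructor
    · rintro ⟨⟨_, hx2⟩, hxK⟩; exact ⟨hxK, hx2⟩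
    · rintro ⟨hxK, hx2⟩; exact ⟨⟨hK hxK, hx2⟩, hxK⟩
  have s2 : (E \ J.biUnion φ) \ K = (E \ K) \ J.biUnion φ := by
    ext x
    simp only [mem_sdiff]
    tauto
  have n2 : (K \ J.biUnion φ).card + ((E \ K) \ J.biUnion φ).card = (E \ J.biUnion φ).card := by
    rw [← s1, ← s2]
    exact Finset.card_inter_add_card_sdiff (E \ J.biUnion φ) K
  have c3 : ((E \ J.biUnion φ).card : ℤ) = ∑ i ∈ Jᶜ, h {i} := by
    rw [← hcompl]
    exact card_biUnion_int h φ hcard hdisj Jᶜ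
  have hs := hself Jᶜ
  rw [compl_compl] at hs
  have n1' : ((K ∩ J.biUnion φ).card : ℤ) + ((K \ J.biUnion φ).card : ℤ) = (K.card : ℤ) := by
    exact_mod_cast congrArg (Nat.cast : ℕ → ℤ) n1
  have n2' : ((K \ J.biUnion φ).card : ℤ) + (((E \ K) \ J.biUnion φ).card : ℤ)
      = ((E \ J.biUnion φ).card : ℤ) := by
    exact_mod_cast congrArg (Nat.cast : ℕ → ℤ) n2
  rw [c1]
  linarith

lemma expandP_selfdual_le (h : Finset N → ℤ)
    (hself : ∀ I : Finset N, h I = h Iᶜ - h Finset.univ + ∑ i ∈ I, h {i})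
    (φ : N → Finset M)
    (hcard : ∀ i : N, ((φ i).card : ℤ) = h {i})
    (hdisj : ∀ i j : N, i ≠ j → Disjoint (φ i) (φ j))
    {K : Finset M} (hK : K ⊆ Finset.univ.biUnion φ) :
    expandP h φ K ≤ expandP h φ (Finset.univ.biUnion φ \ K) - h Finset.univ + (K.card : ℤ) := by
  have H : expandP h φ K + h Finset.univ - (K.card : ℤ)
      ≤ expandP h φ (Finset.univ.biUnion φ \ K) := by
    apply le_expandP
    intro J
    have h1 := expandP_le h φ K Jᶜ
    have h2 := key_identity h hself φ hcard hdisj hK J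
    linarith
  linarith

end Aux

theorem free_expansion_tight_selfdual {N M : Type*} [Fintype N] [DecidableEq N] [DecidableEq M]
    (h : Finset N → ℤ)
    (hnorm : h ∅ = 0)
    (hmono : ∀ I J : Finset N, I ⊆ J → h I ≤ h J)
    (hsub : ∀ I J : Finset N, h (I ∪ J) + h (I ∩ J) ≤ h I + h J)
    (htight : ∀ i : N, h {i}ᶜ = h Finset.univ)
    (hself : ∀ I : Finset N, h I = h Iᶜ - h Finset.univ + ∑ i ∈ I, h {i})
    (φ : N → Finset M)
    (hcard : ∀ i : N, ((φ i).card : ℤ) = h {i})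
    (hdisj : ∀ i j : N, i ≠ j → Disjoint (φ i) (φ j)) :
    (∀ k ∈ Finset.univ.biUnion φ,
      expandP h φ (Finset.univ.biUnion φ \ {k}) = expandP h φ (Finset.univ.biUnion φ)) ∧
    (∀ K ⊆ Finset.univ.biUnion φ,
      expandP h φ K = expandP h φ (Finset.univ.biUnion φ \ K)
        - expandP h φ (Finset.univ.biUnion φ) + ∑ k ∈ K, expandP h φ {k}) := by
  set E := Finset.univ.biUnion φ with hEdef
  have hEu : expandP h φ E = h Finset.univ := expandP_univ h hnorm hmono hsub φ hcard hdisj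
  have hEcard : (E.card : ℤ) = ∑ i : N, h {i} := card_biUnion_int h φ hcard hdisj Finset.univ
  have hu2 : 2 * h Finset.univ = ∑ i : N, h {i} := by
    have := hself Finset.univ
    rw [Finset.compl_univ, hnorm] at this
    linarith
  have part2 : ∀ K ⊆ E, expandP h φ K = expandP h φ (E \ K)
      - expandP h φ E + ∑ k ∈ K, expandP h φ {k} := by
    intro K hK
    have hsum : ∑ k ∈ K, expandP h φ {k} = (K.card : ℤ) := by
      rw [Finset.sum_congr rfl (fun k hk => expandP_single h hnorm hmono φ hcard (hK hk))]
      simp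
    have h1 := expandP_selfdual_le h hself φ hcard hdisj hK
    have h2 := expandP_selfdual_le h hself φ hcard hdisj
      (Finset.sdiff_subset : E \ K ⊆ E)
    have hEK : E \ (E \ K) = K := by
      exact Finset.sdiff_sdiff_eq_self hK
    rw [hEK] at h2
    have hc : ((E \ K).card : ℤ) = (E.card : ℤ) - (K.card : ℤ) := by
      have := Finset.card_sdiff_add_card_eq_card hK
      push_cast [← this]
      ring
    rw [hEu, hsum]
    linarith
  refine ⟨fun k hk => ?_, part2⟩
  have := part2 {k} (Finset.singleton_subset_iff.2 hk)
  rw [Finset.sum_singleton] at this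
  linarith
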